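/- For every natural number n ≥ 3, the friendship graph F_n is not D-unique: the graphs F_n and (K_n ∘ K₁) + K₁ are not isomorphic but have the same domination polynomial, D(F_n, x) = D((K_n ∘ K₁) + K₁, x). -/

import Mathlib

open Polynomial

variable {V W : Type*}

/-- `S` is a dominating set of `G`. -/
def Dominates (G : SimpleGraph V) (S : Finset V) : Prop :=
  ∀ v, v ∉ S → ∃ u ∈ S, G.Adj u v

open Classical in
/-- The domination polynomial of a finite simple graph. -/
noncomputable def domPoly [Fintype V] (G : SimpleGraph V) : Polynomial ℤ :=
  ∑ S : Finset V, if Dominates G S then (X : Polynomial ℤ) ^ S.card else 0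

/-- The join of two graphs on disjoint vertex sets. -/
def graphJoin (G : SimpleGraph V) (H : SimpleGraph W) : SimpleGraph (V ⊕ W) where
  Adj x y :=
    match x, y with
    | Sum.inl a, Sum.inl b => G.Adj a b
    | Sum.inr a, Sum.inr b => H.Adj a b
    | _, _ => True
  symm.symm := by
    rintro (a | a) (b | b) h
    · exact G.adj_symm h
    · trivial
    · trivial
    · exact H.adj_symm h
  loopless.irrefl := by
    rintro (a | a) h
    · exact G.irrefl h
    · exact H.irrefl h

/-- The corona `G ∘ H`. -/
def corona (G : SimpleGraph V) (H : SimpleGraph W) : SimpleGraph (V ⊕ V × W) where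
  Adj x y :=
    match x, y with
    | Sum.inl a, Sum.inl b => G.Adj a b
    | Sum.inl a, Sum.inr (b, _) => a = b
    | Sum.inr (b, _), Sum.inl a => a = b
    | Sum.inr (a, w), Sum.inr (b, w') => a = b ∧ H.Adj w w'
  symm.symm := by
    rintro (a | ⟨a, w⟩) (b | ⟨b, w'⟩) h
    · exact G.adj_symm h
    · exact h
    · exact h
    · exact ⟨h.1.symm, H.adj_symm h.2⟩
  loopless.irrefl := by
    rintro (a | ⟨a, w⟩) h
    · exact G.irrefl h
    · exact H.irrefl h.2

/-- `n` disjoint copies of `K₂`. -/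
def nK2 (n : ℕ) : SimpleGraph (Fin n × Fin 2) where
  Adj x y := x.1 = y.1 ∧ x.2 ≠ y.2
  symm.symm := by rintro ⟨i, a⟩ ⟨j, b⟩ ⟨h1, h2⟩; exact ⟨h1.symm, h2.symm⟩
  loopless.irrefl := by rintro ⟨i, a⟩ ⟨_, h⟩; exact h rfl

/-- The friendship graph `F_n = K₁ + nK₂`. -/
def friendship (n : ℕ) : SimpleGraph (Fin 1 ⊕ Fin n × Fin 2) :=
  graphJoin (⊤ : SimpleGraph (Fin 1)) (nK2 n)

section Aux

/-- No triangle among the `nK2` part of the friendship graph. -/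
lemma no_tri {n : ℕ} {p q r : Fin n × Fin 2}
    (h1 : (friendship n).Adj (Sum.inr p) (Sum.inr q))
    (h2 : (friendship n).Adj (Sum.inr q) (Sum.inr r))
    (h3 : (friendship n).Adj (Sum.inr p) (Sum.inr r)) : False := by
  obtain ⟨-, h1⟩ := h1
  obtain ⟨-, h2⟩ := h2
  obtain ⟨-, h3⟩ := h3
  have v1 : p.2.val ≠ q.2.val := fun h => h1 (Fin.ext h)
  have v2 : q.2.val ≠ r.2.val := fun h => h2 (Fin.ext h)
  have v3 : p.2.val ≠ r.2.val := fun h => h3 (Fin.ext h)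
  have b1 := p.2.isLt
  have b2 := q.2.isLt
  have b3 := r.2.isLt
  omega

/-- The friendship graph has no 4 pairwise adjacent vertices. -/
lemma no_K4 {n : ℕ} (x0 x1 x2 x3 : Fin 1 ⊕ Fin n × Fin 2)
    (h01 : (friendship n).Adj x0 x1) (h02 : (friendship n).Adj x0 x2)
    (h03 : (friendship n).Adj x0 x3) (h12 : (friendship n).Adj x1 x2)
    (h13 : (friendship n).Adj x1 x3) (h23 : (friendship n).Adj x2 x3) : False := by
  rcases x0 with a0 | p0 <;> rcases x1 with a1 | p1 <;>
    rcases x2 with a2 | p2 <;> rcases x3 with a3 | p3 <;>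
    first
      | exact h01 (Subsingleton.elim _ _)
      | exact h02 (Subsingleton.elim _ _)
      | exact h03 (Subsingleton.elim _ _)
      | exact h12 (Subsingleton.elim _ _)
      | exact h13 (Subsingleton.elim _ _)
      | exact h23 (Subsingleton.elim _ _)
      | exact no_tri h01 h12 h02
      | exact no_tri h01 h13 h03
      | exact no_tri h02 h23 h03
      | exact no_tri h12 h23 h13

/-- Characterization of dominating sets of the friendship graph. -/
lemma dom_friendship_iff {n : ℕ} (hn : 0 < n) (S : Finset (Fin 1 ⊕ Fin n × Fin 2)) :
    Dominates (friendship n) S ↔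
      (Sum.inl 0 ∈ S ∨
        ∀ i : Fin n, Sum.inr (i, (0 : Fin 2)) ∈ S ∨ Sum.inr (i, (1 : Fin 2)) ∈ S) := by
  constructor
  · intro h
    by_contra hc
    push_neg at hc
    obtain ⟨h0, i, hi0, hi1⟩ := hc
    obtain ⟨u, huS, hadj⟩ := h (Sum.inr (i, 0)) hi0
    rcases u with a | ⟨j, b⟩
    · exact h0 (by simpa [Subsingleton.elim a 0] using huS)
    · obtain ⟨hji, hb⟩ := hadj
      have hb1 : b = 1 := by
        have h1 : b.val ≠ 0 := fun h => hb (Fin.ext h)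
        have h2 := b.isLt
        exact Fin.ext (by omega)
      subst hji; subst hb1
      exact hi1 huS
  · rintro (h0 | hpairs) v hv
    · rcases v with a | p
      · exact absurd (show Sum.inl a ∈ S by simpa [Subsingleton.elim a 0] using h0) hv
      · exact ⟨Sum.inl 0, h0, trivial⟩
    · rcases v with a | ⟨i, b⟩
      · rcases hpairs ⟨0, hn⟩ with h | h
        · exact ⟨_, h, trivial⟩
        · exact ⟨_, h, trivial⟩
      · rcases hpairs i with h | h
        · exact ⟨_, h, ⟨rfl, fun hb => hv (by
            rw [show b = (0 : Fin 2) from hb.symm]; exact h)⟩⟩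
        · exact ⟨_, h, ⟨rfl, fun hb => hv (by
            rw [show b = (1 : Fin 2) from hb.symm]; exact h)⟩⟩

/-- Characterization of dominating sets of `(K_n ∘ K₁) + K₁`. -/
lemma dom_G2_iff {n : ℕ} (hn : 0 < n)
    (T : Finset ((Fin n ⊕ Fin n × Fin 1) ⊕ Fin 1)) :
    Dominates (graphJoin (corona (⊤ : SimpleGraph (Fin n)) (⊤ : SimpleGraph (Fin 1)))
        (⊤ : SimpleGraph (Fin 1))) T ↔
      (Sum.inr 0 ∈ T ∨
        ∀ i : Fin n,
          Sum.inl (Sum.inl i) ∈ T ∨ Sum.inl (Sum.inr (i, (0 : Fin 1))) ∈ T) := by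
  constructor
  · intro h
    by_contra hc
    push_neg at hc
    obtain ⟨h0, i, hi0, hi1⟩ := hc
    obtain ⟨u, huS, hadj⟩ := h (Sum.inl (Sum.inr (i, 0))) hi1
    rcases u with (j | ⟨j, w⟩) | a
    · exact hi0 (by rwa [show j = i from hadj] at huS)
    · exact hadj.2 (Subsingleton.elim _ _)
    · exact h0 (by simpa [Subsingleton.elim a 0] using huS)
  · rintro (h0 | hpairs) v hv
    · rcases v with x | a
      · exact ⟨Sum.inr 0, h0, trivial⟩
      · exact absurd (show Sum.inr a ∈ T by simpa [Subsingleton.elim a 0] using h0) hv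
    · rcases v with (i | ⟨i, w⟩) | a
      · rcases hpairs i with h | h
        · exact absurd h hv
        · exact ⟨_, h, rfl⟩
      · rcases hpairs i with h | h
        · exact ⟨_, h, rfl⟩
        · exact absurd (show Sum.inl (Sum.inr (i, w)) ∈ T by
            simpa [Subsingleton.elim w 0] using h) hv
      · rcases hpairs ⟨0, hn⟩ with h | h
        · exact ⟨_, h, trivial⟩
        · exact ⟨_, h, trivial⟩

/-- A cardinality-preserving bijection between the vertex sets. -/
def myEquiv (n : ℕ) : (Fin 1 ⊕ Fin n × Fin 2) ≃ ((Fin n ⊕ Fin n × Fin 1) ⊕ Fin 1) where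
  toFun x :=
    match x with
    | Sum.inl _ => Sum.inr 0
    | Sum.inr (i, b) => if b = 0 then Sum.inl (Sum.inl i) else Sum.inl (Sum.inr (i, 0))
  invFun y :=
    match y with
    | Sum.inr _ => Sum.inl 0
    | Sum.inl (Sum.inl i) => Sum.inr (i, 0)
    | Sum.inl (Sum.inr (i, _)) => Sum.inr (i, 1)
  left_inv := by
    rintro (a | ⟨i, b⟩)
    · simp [Subsingleton.elim (0 : Fin 1) a]
    · rcases b with ⟨bv, hb⟩
      interval_cases bv <;> simp
  right_inv := by
    rintro ((i | ⟨i, w⟩) | a)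
    · simp
    · simp [Subsingleton.elim (0 : Fin 1) w]
    · simp [Subsingleton.elim (0 : Fin 1) a]

end Aux

/-- For `n ≥ 3` the friendship graph is not `D`-unique: `F_n` and
`(K_n ∘ K₁) + K₁` are non-isomorphic graphs with equal domination polynomials. -/
theorem friendship_not_unique (n : ℕ) (hn : 3 ≤ n) :
    IsEmpty (friendship n ≃g
        graphJoin (corona (⊤ : SimpleGraph (Fin n)) (⊤ : SimpleGraph (Fin 1)))
          (⊤ : SimpleGraph (Fin 1))) ∧
      domPoly (friendship n) =
        domPoly (graphJoin (corona (⊤ : SimpleGraph (Fin n)) (⊤ : SimpleGraph (Fin 1)))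
          (⊤ : SimpleGraph (Fin 1))) := by
  constructor
  · refine ⟨fun e => ?_⟩
    set G2 := graphJoin (corona (⊤ : SimpleGraph (Fin n)) (⊤ : SimpleGraph (Fin 1)))
      (⊤ : SimpleGraph (Fin 1))
    have f := e.symm
    -- four pairwise adjacent vertices in G2
    have h0 : (0:ℕ) < n := by omega
    have h1 : (1:ℕ) < n := by omega
    have h2 : (2:ℕ) < n := by omega
    have A : (Fin n ⊕ Fin n × Fin 1) ⊕ Fin 1 := Sum.inr 0
    have hBC : (⟨0, h0⟩ : Fin n) ≠ ⟨1, h1⟩ := by simp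
    have hBD : (⟨0, h0⟩ : Fin n) ≠ ⟨2, h2⟩ := by simp
    have hCD : (⟨1, h1⟩ : Fin n) ≠ ⟨2, h2⟩ := by simp
    have hAB : G2.Adj (Sum.inr 0) (Sum.inl (Sum.inl ⟨0, h0⟩)) := trivial
    have hAC : G2.Adj (Sum.inr 0) (Sum.inl (Sum.inl ⟨1, h1⟩)) := trivial
    have hAD : G2.Adj (Sum.inr 0) (Sum.inl (Sum.inl ⟨2, h2⟩)) := trivial
    have hBC' : G2.Adj (Sum.inl (Sum.inl ⟨0, h0⟩)) (Sum.inl (Sum.inl ⟨1, h1⟩)) := hBC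
    have hBD' : G2.Adj (Sum.inl (Sum.inl ⟨0, h0⟩)) (Sum.inl (Sum.inl ⟨2, h2⟩)) := hBD
    have hCD' : G2.Adj (Sum.inl (Sum.inl ⟨1, h1⟩)) (Sum.inl (Sum.inl ⟨2, h2⟩)) := hCD
    exact no_K4 _ _ _ _
      (f.map_adj_iff.mpr hAB) (f.map_adj_iff.mpr hAC) (f.map_adj_iff.mpr hAD)
      (f.map_adj_iff.mpr hBC') (f.map_adj_iff.mpr hBD') (f.map_adj_iff.mpr hCD')
  · unfold domPoly
    refine Fintype.sum_equiv (Equiv.finsetCongr (myEquiv n)) _ _ fun S => ?_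
    have hn0 : 0 < n := by omega
    have hd : Dominates (friendship n) S ↔
        Dominates (graphJoin (corona (⊤ : SimpleGraph (Fin n)) (⊤ : SimpleGraph (Fin 1)))
          (⊤ : SimpleGraph (Fin 1))) (S.map (myEquiv n).toEmbedding) := by
      rw [dom_friendship_iff hn0 S, dom_G2_iff hn0]
      simp only [Finset.mem_map_equiv]
      have e1 : (myEquiv n).symm (Sum.inr 0) = Sum.inl 0 := rfl
      have e2 : ∀ i : Fin n, (myEquiv n).symm (Sum.inl (Sum.inl i)) = Sum.inr (i, 0) :=
        fun i => rfl
      have e3 : ∀ i : Fin n,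
          (myEquiv n).symm (Sum.inl (Sum.inr (i, (0 : Fin 1)))) = Sum.inr (i, 1) :=
        fun i => rfl
      rw [e1]
      constructor
      · rintro (h | h)
        · exact Or.inl h
        · exact Or.inr fun i => by rw [e2 i, e3 i]; exact h i
      · rintro (h | h)
        · exact Or.inl h
        · exact Or.inr fun i => by have := h i; rw [e2 i, e3 i] at this; exact this
    simp only [Equiv.finsetCongr_apply, Finset.card_map]
    classical
    exact if_congr hd rfl rfl
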